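/- Let A ∈ ℝ^{n×n} be Hurwitz, B ∈ ℝ^{n×m}, x₀ ∈ ℝ^n, and P ∈ ℝ^{n̂×n} full row rank with orthogonal complement P̄ (P†P + P̄†P̄ = I). Consider the augmented system ė = PAP† e + PA P̄†P̄ x̂, ẋ̂ = A x̂ + B u with e(0) = 0, x̂(0) = x₀. Then for every input u, the solution x of ẋ = Ax + Bu, x(0) = x₀, satisfies x(t) = P† ξ(t) + P† e(t) + P̄†P̄ x̂(t) for all t, where ξ solves ξ̇ = PAP† ξ + PB u, ξ(0) = P x₀. In particular x̂(t) = x(t) and e(t) = P x(t) − ξ(t). -/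

import Mathlib

open Matrix Set

/-- Uniqueness for linear ODEs with constant matrix and time-dependent forcing. -/
lemma lin_ode_unique {k : ℕ} (M : Matrix (Fin k) (Fin k) ℝ) (c : ℝ → Fin k → ℝ)
    (f g : ℝ → Fin k → ℝ)
    (hf : ∀ t, HasDerivAt f (M *ᵥ f t + c t) t)
    (hg : ∀ t, HasDerivAt g (M *ᵥ g t + c t) t)
    (h0 : f 0 = g 0) : ∀ t, f t = g t := by
  intro t
  set L := (Matrix.mulVecLin M).toContinuousLinearMap with hL
  have hLapp : ∀ y : Fin k → ℝ, L y = M *ᵥ y := by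
    intro y; simp [hL]
  have hv : ∀ s : ℝ, LipschitzOnWith ‖L‖₊ (fun y : Fin k → ℝ => M *ᵥ y + c s) univ := by
    intro s
    refine LipschitzWith.lipschitzOnWith ?_
    refine LipschitzWith.of_dist_le_mul fun y z => ?_
    have := L.lipschitz.dist_le_mul y z
    simpa [hLapp, dist_add_right] using this
  have ht0 : (0 : ℝ) ∈ Ioo (-(|t| + 1)) (|t| + 1) := by
    constructor <;> [linarith [abs_nonneg t]; linarith [abs_nonneg t]]
  have key := ODE_solution_unique_of_mem_Icc (v := fun s y => M *ᵥ y + c s)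
    (s := fun _ => univ) (K := ‖L‖₊) (f := f) (g := g) (t₀ := 0)
    (a := -(|t| + 1)) (b := |t| + 1)
    (fun s _ => hv s) ht0
    (fun t' _ => (hf t').continuousAt.continuousWithinAt)
    (fun t' _ => hf t') (fun _ _ => mem_univ _)
    (fun t' _ => (hg t').continuousAt.continuousWithinAt)
    (fun t' _ => hg t') (fun _ _ => mem_univ _) h0
  exact key ⟨by linarith [neg_abs_le t], by linarith [le_abs_self t]⟩

/-- Derivative composed with a matrix multiplication. -/
lemma hasDerivAt_mulVec {k l : ℕ} (M : Matrix (Fin l) (Fin k) ℝ)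
    {f : ℝ → Fin k → ℝ} {f' : Fin k → ℝ} {t : ℝ} (hf : HasDerivAt f f' t) :
    HasDerivAt (fun s => M *ᵥ f s) (M *ᵥ f') t := by
  have := ((Matrix.mulVecLin M).toContinuousLinearMap.hasFDerivAt
    (x := f t)).comp_hasDerivAt t hf
  simpa [Function.comp_def] using this

/-- parallel-interconnection (error system) realization.  With the
augmented system `ė = PAP†e + PAP̄†P̄x̂`, `x̂' = Ax̂ + Bu`, `e(0) = 0`,
`x̂(0) = x₀`, and the reduced model `ξ̇ = PAP†ξ + PBu`, `ξ(0) = Px₀`, the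
solution `x` of `ẋ = Ax + Bu`, `x(0) = x₀`, satisfies
`x = P†ξ + P†e + P̄†P̄x̂`; in particular `x̂ = x` and `e = Px − ξ`. -/
theorem stmt7 {n m nh : ℕ}
    (A : Matrix (Fin n) (Fin n) ℝ) (B : Matrix (Fin n) (Fin m) ℝ) (x₀ : Fin n → ℝ)
    (P : Matrix (Fin nh) (Fin n) ℝ) (Pdag : Matrix (Fin n) (Fin nh) ℝ)
    (Pb : Matrix (Fin (n - nh)) (Fin n) ℝ) (Pbdag : Matrix (Fin n) (Fin (n - nh)) ℝ)
    (hPP : P * Pdag = 1) (hPbPb : Pb * Pbdag = 1)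
    (hcompl : Pdag * P + Pbdag * Pb = 1)
    (u : ℝ → Fin m → ℝ)
    (x : ℝ → Fin n → ℝ) (xh : ℝ → Fin n → ℝ)
    (e : ℝ → Fin nh → ℝ) (ξ : ℝ → Fin nh → ℝ)
    (hx0 : x 0 = x₀)
    (hx : ∀ t : ℝ, HasDerivAt x (A *ᵥ x t + B *ᵥ u t) t)
    (hxh0 : xh 0 = x₀)
    (hxh : ∀ t : ℝ, HasDerivAt xh (A *ᵥ xh t + B *ᵥ u t) t)
    (he0 : e 0 = 0)
    (he : ∀ t : ℝ, HasDerivAt e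
      ((P * A * Pdag) *ᵥ e t + (P * A * Pbdag * Pb) *ᵥ xh t) t)
    (hξ0 : ξ 0 = P *ᵥ x₀)
    (hξ : ∀ t : ℝ, HasDerivAt ξ ((P * A * Pdag) *ᵥ ξ t + (P * B) *ᵥ u t) t) :
    (∀ t : ℝ, x t = Pdag *ᵥ ξ t + Pdag *ᵥ e t + Pbdag *ᵥ (Pb *ᵥ xh t)) ∧
    (∀ t : ℝ, xh t = x t) ∧
    (∀ t : ℝ, e t = P *ᵥ x t - ξ t) := by
  -- Step 1: xh = x by uniqueness.
  have hxhx : ∀ t, xh t = x t :=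
    lin_ode_unique A (fun t => B *ᵥ u t) xh x hxh hx (by rw [hxh0, hx0])
  -- Step 2: e + ξ = P x by uniqueness.
  have hsum : ∀ t, e t + ξ t = P *ᵥ x t := by
    apply lin_ode_unique (P * A * Pdag)
      (fun t => (P * A * Pbdag * Pb) *ᵥ x t + (P * B) *ᵥ u t)
    · intro t
      have := (he t).add (hξ t)
      have hrw : (P * A * Pdag) *ᵥ e t + (P * A * Pbdag * Pb) *ᵥ xh t +
          ((P * A * Pdag) *ᵥ ξ t + (P * B) *ᵥ u t)
          = (P * A * Pdag) *ᵥ (e t + ξ t) +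
            ((P * A * Pbdag * Pb) *ᵥ x t + (P * B) *ᵥ u t) := by
        rw [hxhx t, mulVec_add]
        abel
      rw [hrw] at this
      exact this
    · intro t
      have hD := hasDerivAt_mulVec P (hx t)
      have hrw : P *ᵥ (A *ᵥ x t + B *ᵥ u t)
          = (P * A * Pdag) *ᵥ (P *ᵥ x t) +
            ((P * A * Pbdag * Pb) *ᵥ x t + (P * B) *ᵥ u t) := by
        have h1 : P * A * Pdag * P + P * A * Pbdag * Pb = P * A := by
          rw [Matrix.mul_assoc (P * A) Pdag P, Matrix.mul_assoc (P * A) Pbdag Pb,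
            ← Matrix.mul_add, hcompl, Matrix.mul_one]
        rw [mulVec_add, mulVec_mulVec, mulVec_mulVec, mulVec_mulVec]
        conv_lhs => rw [← h1]
        rw [add_mulVec]
        abel
      rw [hrw] at hD
      exact hD
    · rw [he0, hξ0, hx0, zero_add]
  have he_eq : ∀ t, e t = P *ᵥ x t - ξ t := fun t => by
    rw [← hsum t]; abel
  refine ⟨?_, hxhx, he_eq⟩
  intro t
  rw [hxhx t]
  have : Pdag *ᵥ ξ t + Pdag *ᵥ e t + Pbdag *ᵥ (Pb *ᵥ x t)
      = Pdag *ᵥ (e t + ξ t) + Pbdag *ᵥ (Pb *ᵥ x t) := by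
    rw [mulVec_add]; abel
  rw [this, hsum t, mulVec_mulVec, mulVec_mulVec, ← add_mulVec, hcompl, one_mulVec]
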